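/- arXiv:2303.18180 — 4 statements merged into one kernel-verified Lean document; each statement's English description precedes it below -/
import Mathlib

section
/- Suppose the Peer order conditions hold: A V_r = B V_r P_r^{−1} + K V_r Ẽ_r (forward, interior step) and A^T V_q = B^T V_q P_q − K^T V_q Ẽ_q (adjoint, interior step), where all matrices are s×s and q ≤ r ≤ s. Then the combined condition Ẽ_q^T (V_q^T K V_r) + (V_q^T K V_r) Ẽ_r = P_q^T V_q^T B V_r − V_q^T B V_r P_r^{−1} holds. -/
open Matrix BigOperators

/-- The nilpotent matrix `Ẽ_n` with entries `(Ẽ_n)_{i,i+1} = i` (1-based). -/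
def Etilde (n : ℕ) : Matrix (Fin n) (Fin n) ℝ :=
  Matrix.of fun i j => if (j : ℕ) = (i : ℕ) + 1 then ((i : ℕ) + 1 : ℝ) else 0

/-- Pascal matrix `P_n` with entries `binom(j−1, i−1)` (1-based). -/
def Pascal (n : ℕ) : Matrix (Fin n) (Fin n) ℝ :=
  Matrix.of fun i j => (Nat.choose (j : ℕ) (i : ℕ) : ℝ)

/-- Vandermonde matrix `V_k = (𝟙, c, c², …, c^{k−1}) ∈ ℝ^{s×k}` (entrywise powers). -/
def Vand {s : ℕ} (c : Fin s → ℝ) (k : ℕ) : Matrix (Fin s) (Fin k) ℝ :=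
  Matrix.of fun i j => c i ^ (j : ℕ)

/-- Combined order condition (cocos) of Lemma 4.2: the interior forward and adjoint
order conditions imply
`Ẽ_qᵀ (V_qᵀ K V_r) + (V_qᵀ K V_r) Ẽ_r = P_qᵀ V_qᵀ B V_r − V_qᵀ B V_r P_r⁻¹`. -/
theorem stmt12 (s q r : ℕ) (hqr : q ≤ r) (hrs : r ≤ s) (c : Fin s → ℝ)
    (A B K : Matrix (Fin s) (Fin s) ℝ)
    (hfwd : A * Vand c r = B * Vand c r * (Pascal r)⁻¹ + K * Vand c r * Etilde r)
    (hadj : Aᵀ * Vand c q = Bᵀ * Vand c q * Pascal q - Kᵀ * Vand c q * Etilde q) :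
    (Etilde q)ᵀ * ((Vand c q)ᵀ * K * Vand c r) +
        ((Vand c q)ᵀ * K * Vand c r) * Etilde r =
      (Pascal q)ᵀ * (Vand c q)ᵀ * B * Vand c r -
        (Vand c q)ᵀ * B * Vand c r * (Pascal r)⁻¹ := by
  have e1 : (Vand c q)ᵀ * A * Vand c r =
      (Vand c q)ᵀ * B * Vand c r * (Pascal r)⁻¹ + (Vand c q)ᵀ * K * Vand c r * Etilde r := by
    have := congrArg (fun M => (Vand c q)ᵀ * M) hfwd
    simpa [Matrix.mul_add, Matrix.mul_assoc] using this
  have e2 : (Vand c q)ᵀ * A * Vand c r =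
      (Pascal q)ᵀ * (Vand c q)ᵀ * B * Vand c r - (Etilde q)ᵀ * ((Vand c q)ᵀ * K * Vand c r) := by
    have := congrArg (fun M => Mᵀ * Vand c r) hadj
    simpa [Matrix.transpose_mul, Matrix.sub_mul, Matrix.mul_assoc] using this
  have e3 : (Etilde q)ᵀ * ((Vand c q)ᵀ * K * Vand c r) =
      (Pascal q)ᵀ * (Vand c q)ᵀ * B * Vand c r - (Vand c q)ᵀ * A * Vand c r := by
    rw [e2]; abel
  rw [e3, e1]; abel
end

section
/- Suppose the end-step forward condition A_N V_r = B_N V_r P_r^{−1} + K_N V_r Ẽ_r, the adjoint end condition A_N^T V_q = w 𝟙_r^T − K_N^T V_q Ẽ_q with V_r^T w = 𝟙, and the adjoint condition for n = N−1 giving V_q^T B_N = V_q^T B. Then Ẽ_q^T (V_q^T K_N V_r) + (V_q^T K_N V_r) Ẽ_r = 𝟙_q 𝟙_r^T − V_q^T B V_r P_r^{−1}. -/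
open Matrix BigOperators

/-- Combined order condition (cocoN) of Lemma 4.2 for the end step:
`Ẽ_qᵀ (V_qᵀ K_N V_r) + (V_qᵀ K_N V_r) Ẽ_r = 𝟙_q 𝟙_rᵀ − V_qᵀ B V_r P_r⁻¹`. -/
theorem stmt14 (s q r : ℕ) (c : Fin s → ℝ)
    (AN KN BN B : Matrix (Fin s) (Fin s) ℝ) (w : Fin s → ℝ)
    (hfwd : AN * Vand c r = BN * Vand c r * (Pascal r)⁻¹ + KN * Vand c r * Etilde r)
    (hadj : ANᵀ * Vand c q =
      Matrix.vecMulVec w (fun _ : Fin q => (1 : ℝ)) - KNᵀ * Vand c q * Etilde q)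
    (hw : (Vand c r)ᵀ.mulVec w = fun _ : Fin r => (1 : ℝ))
    (hB : (Vand c q)ᵀ * BN = (Vand c q)ᵀ * B) :
    (Etilde q)ᵀ * ((Vand c q)ᵀ * KN * Vand c r) +
        ((Vand c q)ᵀ * KN * Vand c r) * Etilde r =
      Matrix.of (fun (_ : Fin q) (_ : Fin r) => (1 : ℝ)) -
        (Vand c q)ᵀ * B * Vand c r * (Pascal r)⁻¹ := by
  -- transpose of the adjoint condition, multiplied on the right by V_r
  have h3 : (Vand c q)ᵀ * AN * Vand c r =
      (Matrix.vecMulVec w (fun _ : Fin q => (1 : ℝ)))ᵀ * Vand c r -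
        (Etilde q)ᵀ * ((Vand c q)ᵀ * KN * Vand c r) := by
    have := congrArg (fun M => Mᵀ * Vand c r) hadj
    simpa [Matrix.transpose_mul, Matrix.sub_mul, Matrix.mul_assoc] using this
  -- the rank-one part collapses to the all-ones matrix
  have hones : (Matrix.vecMulVec w (fun _ : Fin q => (1 : ℝ)))ᵀ * Vand c r =
      Matrix.of (fun (_ : Fin q) (_ : Fin r) => (1 : ℝ)) := by
    ext i j
    have := congrFun hw j
    simp only [Matrix.mulVec, dotProduct, Matrix.transpose_apply] at this
    simp only [Matrix.mul_apply, Matrix.transpose_apply, Matrix.vecMulVec_apply,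
      Matrix.of_apply]
    simpa [mul_comm] using this
  -- forward condition multiplied on the left by V_qᵀ
  have h2 : (Vand c q)ᵀ * AN * Vand c r =
      (Vand c q)ᵀ * B * Vand c r * (Pascal r)⁻¹ +
        ((Vand c q)ᵀ * KN * Vand c r) * Etilde r := by
    have := congrArg (fun M => (Vand c q)ᵀ * M) hfwd
    simp only [Matrix.mul_add, ← Matrix.mul_assoc] at this
    rw [this, hB]
  rw [hones] at h3
  have := h3.symm.trans h2
  -- rearrange
  have h4 : (Etilde q)ᵀ * ((Vand c q)ᵀ * KN * Vand c r) +
      ((Vand c q)ᵀ * KN * Vand c r) * Etilde r =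
      Matrix.of (fun (_ : Fin q) (_ : Fin r) => (1 : ℝ)) -
        (Vand c q)ᵀ * B * Vand c r * (Pascal r)⁻¹ := by
    have := this
    abel_nf at this ⊢
    linear_combination (norm := abel) -this
  exact h4
end

section
/- Under the hypotheses of the combined condition Ẽ_q^T X + X Ẽ_r = 𝟙_q 𝟙_r^T − Q with X = V_q^T K_N V_r, solvability forces e_1^T Q e_1 = 1, i.e., 𝟙^T B 𝟙 = 1 where Q = V_q^T B V_r P_r^{−1}. -/
open Matrix BigOperators

lemma pascal_det (n : ℕ) : (Pascal n).det = 1 := by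
  have h : (Pascal n).BlockTriangular id := by
    intro i j hij
    simp only [Pascal, Matrix.of_apply]
    rw [Nat.choose_eq_zero_of_lt (by exact_mod_cast hij)]
    simp
  rw [Matrix.det_of_upperTriangular h]
  simp [Pascal]

lemma pascal_inv_col (n : ℕ) (hn : 0 < n) (k : Fin n) :
    (Pascal n)⁻¹ k ⟨0, hn⟩ = if k = ⟨0, hn⟩ then 1 else 0 := by
  have hu : IsUnit (Pascal n).det := by rw [pascal_det]; exact isUnit_one
  have h := Matrix.nonsing_inv_mul (Pascal n) hu
  have h0 : ∀ m : Fin n, Pascal n m ⟨0, hn⟩ = if m = ⟨0, hn⟩ then 1 else 0 := by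
    intro m
    simp only [Pascal, Matrix.of_apply]
    rcases eq_or_ne m ⟨0, hn⟩ with hm | hm
    · simp [hm]
    · rw [if_neg hm, Nat.choose_eq_zero_of_lt]
      · simp
      · have : (m : ℕ) ≠ 0 := fun h' => hm (Fin.ext h')
        omega
  have := congrFun (congrFun h k) ⟨0, hn⟩
  rw [Matrix.mul_apply] at this
  simp only [h0, mul_ite, mul_one, mul_zero] at this
  rw [Finset.sum_ite_eq'] at this
  simp only [Finset.mem_univ, if_true] at this
  rw [this, Matrix.one_apply]

/-- Solvability of `Ẽ_qᵀ X + X Ẽ_r = 𝟙_q 𝟙_rᵀ − Q` with `X = V_qᵀ K_N V_r` forces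
`e_1ᵀ Q e_1 = 1`, i.e. `𝟙ᵀ B 𝟙 = 1`. -/
theorem stmt15 (s q r : ℕ) (hq : 0 < q) (hr : 0 < r) (c : Fin s → ℝ)
    (KN B : Matrix (Fin s) (Fin s) ℝ) (Q : Matrix (Fin q) (Fin r) ℝ)
    (hQ : Q = (Vand c q)ᵀ * B * Vand c r * (Pascal r)⁻¹)
    (heq : (Etilde q)ᵀ * ((Vand c q)ᵀ * KN * Vand c r) +
        ((Vand c q)ᵀ * KN * Vand c r) * Etilde r =
      Matrix.of (fun (_ : Fin q) (_ : Fin r) => (1 : ℝ)) - Q) :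
    Q ⟨0, hq⟩ ⟨0, hr⟩ = 1 ∧ ∑ i, ∑ j, B i j = 1 := by
  have h1 : Q ⟨0, hq⟩ ⟨0, hr⟩ = 1 := by
    have := congrFun (congrFun heq ⟨0, hq⟩) ⟨0, hr⟩
    simp only [Matrix.add_apply, Matrix.sub_apply, Matrix.of_apply, Matrix.mul_apply,
      Matrix.transpose_apply, Etilde] at this
    have hz1 : ∀ k : Fin q,
        (if ((⟨0, hq⟩ : Fin q) : ℕ) = (k : ℕ) + 1 then ((k : ℕ) + 1 : ℝ) else 0) *
          (∑ j, (∑ i, Vand c q i k * KN i j) * Vand c r j ⟨0, hr⟩) = 0 := by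
      intro k; simp
    have hz2 : ∀ k : Fin r,
        (∑ j, (∑ i, Vand c q i ⟨0, hq⟩ * KN i j) * Vand c r j k) *
          (if ((⟨0, hr⟩ : Fin r) : ℕ) = (k : ℕ) + 1 then ((k : ℕ) + 1 : ℝ) else 0) = 0 := by
      intro k; simp
    rw [Finset.sum_congr rfl (fun k _ => hz1 k), Finset.sum_congr rfl (fun k _ => hz2 k)] at this
    simp at this
    linarith
  refine ⟨h1, ?_⟩
  have h2 : ((Vand c q)ᵀ * B * Vand c r * (Pascal r)⁻¹) ⟨0, hq⟩ ⟨0, hr⟩ = ∑ i, ∑ j, B i j := by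
    rw [Matrix.mul_apply]
    have : ∀ k : Fin r, ((Vand c q)ᵀ * B * Vand c r) ⟨0, hq⟩ k * (Pascal r)⁻¹ k ⟨0, hr⟩ =
        if k = ⟨0, hr⟩ then ((Vand c q)ᵀ * B * Vand c r) ⟨0, hq⟩ k else 0 := by
      intro k
      rw [pascal_inv_col r hr k]
      split <;> simp
    rw [Finset.sum_congr rfl (fun k _ => this k), Finset.sum_ite_eq']
    simp only [Finset.mem_univ, if_true]
    simp [Matrix.mul_apply, Vand, Finset.mul_sum, Finset.sum_mul]
    rw [Finset.sum_comm]
  rw [hQ] at h1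
  rw [← h2]
  exact h1
end

section
/- Let K_n ∈ ℝ^{s×s} satisfy the one-leg conditions (c^{l−1})^T K_n = 𝟙^T K_n C^{l−1} for l = 1,…,q. Then for 1 ≤ l ≤ q and 1 ≤ k ≤ r, the (l,k) entry of Ẽ_q^T V_q^T K_n V_r + V_q^T K_n V_r Ẽ_r equals (𝟙^T K_n)·(l+k−2)·c^{l+k−3} (interpreted as 0 when l = k = 1). -/
open Matrix BigOperators

/-- Under the one-leg conditions, the `(l,k)` entry of
`Ẽ_qᵀ V_qᵀ K_n V_r + V_qᵀ K_n V_r Ẽ_r` equals `(𝟙ᵀ K_n)(l+k−2) c^{l+k−3}`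
(1-based; the factor `l+k−2` makes the entry `0` for `l = k = 1`). -/
theorem stmt16 (s q r : ℕ) (c : Fin s → ℝ) (Kn : Matrix (Fin s) (Fin s) ℝ)
    (holeg : ∀ l : ℕ, l < q → ∀ j : Fin s,
      ∑ i, c i ^ l * Kn i j = (∑ i, Kn i j) * c j ^ l) :
    ∀ (l : Fin q) (k : Fin r),
      ((Etilde q)ᵀ * ((Vand c q)ᵀ * Kn * Vand c r) +
          ((Vand c q)ᵀ * Kn * Vand c r) * Etilde r) l k =
        (((l : ℕ) + (k : ℕ) : ℕ) : ℝ) *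
          ∑ j, (∑ i, Kn i j) * c j ^ ((l : ℕ) + (k : ℕ) - 1) := by
  intro l k
  set M := (Vand c q)ᵀ * Kn * Vand c r with hM
  have hA : ∀ (a : Fin q) (b : Fin r),
      M a b = ∑ j, (∑ i, Kn i j) * c j ^ ((a:ℕ)+(b:ℕ)) := by
    intro a b
    simp only [hM, Matrix.mul_apply, Vand, Matrix.transpose_apply, Matrix.of_apply]
    refine Finset.sum_congr rfl fun j _ => ?_
    rw [Finset.sum_mul]
    have : ∑ i, c i ^ (a:ℕ) * Kn i j * c j ^ (b:ℕ)
        = (∑ i, c i ^ (a:ℕ) * Kn i j) * c j ^ (b:ℕ) := (Finset.sum_mul _ _ _).symm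
    rw [this, holeg (a:ℕ) a.isLt j, pow_add, mul_assoc]
  have hE1 : ((Etilde q)ᵀ * M) l k
      = ∑ m : Fin q, (if (l:ℕ) = (m:ℕ)+1 then ((m:ℕ)+1:ℝ) else 0) * M m k := by
    simp [Matrix.mul_apply, Etilde]
  have hE2 : (M * Etilde r) l k
      = ∑ m : Fin r, M l m * (if (k:ℕ) = (m:ℕ)+1 then ((m:ℕ)+1:ℝ) else 0) := by
    simp [Matrix.mul_apply, Etilde]
  rw [Matrix.add_apply, hE1, hE2]
  have h1 : (∑ m : Fin q, (if (l:ℕ) = (m:ℕ)+1 then ((m:ℕ)+1:ℝ) else 0) * M m k)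
      = ((l:ℕ):ℝ) * ∑ j, (∑ i, Kn i j) * c j ^ ((l:ℕ) - 1 + (k:ℕ)) := by
    rcases Nat.eq_zero_or_pos (l:ℕ) with h0 | hpos
    · rw [h0]
      simp [h0]
    · obtain ⟨l', hl'⟩ := Nat.exists_eq_succ_of_ne_zero hpos.ne'
      have hlt : l' < q := by omega
      rw [Finset.sum_eq_single (⟨l', hlt⟩ : Fin q)]
      · have hsub : (l:ℕ) - 1 = l' := by omega
        rw [if_pos hl', hA]
        simp only [Fin.val_mk]
        rw [hl']
        simp only [Nat.succ_sub_one]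
        push_cast; ring
      · intro m _ hm
        have : ¬ ((l:ℕ) = (m:ℕ)+1) := by
          intro h; apply hm; apply Fin.ext; simp; omega
        simp [this]
      · intro h; exact absurd (Finset.mem_univ _) h
  have h2 : (∑ m : Fin r, M l m * (if (k:ℕ) = (m:ℕ)+1 then ((m:ℕ)+1:ℝ) else 0))
      = ((k:ℕ):ℝ) * ∑ j, (∑ i, Kn i j) * c j ^ ((l:ℕ) + ((k:ℕ) - 1)) := by
    rcases Nat.eq_zero_or_pos (k:ℕ) with h0 | hpos
    · rw [h0]
      simp [h0]
    · obtain ⟨k', hk'⟩ := Nat.exists_eq_succ_of_ne_zero hpos.ne'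
      have hlt : k' < r := by omega
      rw [Finset.sum_eq_single (⟨k', hlt⟩ : Fin r)]
      · rw [hA]
        simp only [hk']
        rw [Finset.mul_sum, Finset.sum_mul]
        refine Finset.sum_congr rfl fun j _ => ?_
        push_cast
        ring
      · intro m _ hm
        have : ¬ ((k:ℕ) = (m:ℕ)+1) := by
          intro h; apply hm; apply Fin.ext; simp; omega
        simp [this]
      · intro h; exact absurd (Finset.mem_univ _) h
  rw [h1, h2]
  rcases Nat.eq_zero_or_pos (l:ℕ) with hl0 | hlpos
  · rcases Nat.eq_zero_or_pos (k:ℕ) with hk0 | hkpos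
    · simp [hl0, hk0]
    · have e2 : (l:ℕ) + ((k:ℕ) - 1) = (l:ℕ) + (k:ℕ) - 1 := by omega
      rw [e2, hl0]
      push_cast; ring
  · rcases Nat.eq_zero_or_pos (k:ℕ) with hk0 | hkpos
    · have e1 : (l:ℕ) - 1 + (k:ℕ) = (l:ℕ) + (k:ℕ) - 1 := by omega
      rw [e1, hk0]
      push_cast; ring
    · have e1 : (l:ℕ) - 1 + (k:ℕ) = (l:ℕ) + (k:ℕ) - 1 := by omega
      have e2 : (l:ℕ) + ((k:ℕ) - 1) = (l:ℕ) + (k:ℕ) - 1 := by omega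
      rw [e1, e2, ← add_mul]
      push_cast
      ring
end
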